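/- Every element of finite order in GL_2(ℤ) is conjugate in GL_2(ℤ) to exactly one of the following seven matrices: the identity I₂; −I₂; diag(1,−1); [[1,1],[0,−1]]; T₃ = [[0,1],[−1,−1]]; T₆ = [[0,−1],[1,1]]; and T₄ = [[0,1],[−1,0]]. In particular, no two distinct matrices in this list are conjugate in GL_2(ℤ). -/

import Mathlib

open Matrix

abbrev M2 := Matrix (Fin 2) (Fin 2) ℤ

def Cnj (A B : M2) : Prop := ∃ P : GL (Fin 2) ℤ,
  (P : M2) * A * ((P⁻¹ : GL (Fin 2) ℤ) : M2) = B

lemma cnj_of {M N : M2} (A : M2) (h1 : M * N = 1) (h2 : N * M = 1) : Cnj A (M * A * N) :=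
  ⟨⟨M, N, h1, h2⟩, rfl⟩

lemma cnj_explicit {M N B : M2} (A : M2) (h1 : M * N = 1) (h2 : N * M = 1)
    (h3 : M * A * N = B) : Cnj A B := h3 ▸ cnj_of A h1 h2

lemma cnj_refl (A : M2) : Cnj A A := ⟨1, by simp⟩

lemma cnj_trans {A B C : M2} (h1 : Cnj A B) (h2 : Cnj B C) : Cnj A C := by
  obtain ⟨P, hP⟩ := h1
  obtain ⟨Q, hQ⟩ := h2
  refine ⟨Q * P, ?_⟩
  rw [_root_.mul_inv_rev]
  simp only [Units.val_mul]
  rw [← hQ, ← hP]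
  noncomm_ring

lemma cnj_symm {A B : M2} (h : Cnj A B) : Cnj B A := by
  obtain ⟨P, hP⟩ := h
  refine ⟨P⁻¹, ?_⟩
  rw [← hP, inv_inv]
  have h1 : ((P⁻¹ : GL (Fin 2) ℤ) : M2) * (P : M2) = 1 := by
    rw [← Units.val_mul, inv_mul_cancel, Units.val_one]
  have h2 : (P : M2) * ((P⁻¹ : GL (Fin 2) ℤ) : M2) = 1 := by
    rw [← Units.val_mul, mul_inv_cancel, Units.val_one]
  calc ((P⁻¹:GL (Fin 2) ℤ) : M2) * ((P : M2) * A * ((P⁻¹:GL (Fin 2) ℤ) : M2)) * (P : M2)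
      = (((P⁻¹:GL (Fin 2) ℤ) : M2) * (P : M2)) * A * (((P⁻¹:GL (Fin 2) ℤ) : M2) * (P : M2)) := by
        noncomm_ring
    _ = A := by rw [h1]; simp

lemma cnj_trace {A B : M2} (h : Cnj A B) : A.trace = B.trace := by
  obtain ⟨P, hP⟩ := h
  rw [← hP, Matrix.trace_mul_cycle]
  rw [show ((P⁻¹ : GL (Fin 2) ℤ) : M2) * (P : M2) = 1 by
    rw [← Units.val_mul, inv_mul_cancel, Units.val_one], one_mul]

lemma cnj_det {A B : M2} (h : Cnj A B) : A.det = B.det := by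
  obtain ⟨P, hP⟩ := h
  rw [← hP]
  rw [Matrix.det_mul, Matrix.det_mul]
  have : (P : M2).det * ((P⁻¹ : GL (Fin 2) ℤ) : M2).det = 1 := by
    rw [← Matrix.det_mul, ← Units.val_mul, mul_inv_cancel, Units.val_one, Matrix.det_one]
  linear_combination (-(A.det)) * this

lemma cnj_mod2 {A B : M2} (h : Cnj A B)
    (hA : A.map (Int.cast : ℤ → ZMod 2) = 1) :
    B.map (Int.cast : ℤ → ZMod 2) = 1 := by
  obtain ⟨P, hP⟩ := h
  have key : ∀ X Y : M2, (X * Y).map (Int.cast : ℤ → ZMod 2)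
      = X.map Int.cast * Y.map Int.cast := fun X Y =>
    map_mul (Int.castRingHom (ZMod 2)).mapMatrix X Y
  have hinv : ((P : M2) * ((P⁻¹ : GL (Fin 2) ℤ) : M2)).map (Int.cast : ℤ → ZMod 2) = 1 := by
    rw [show (P : M2) * ((P⁻¹ : GL (Fin 2) ℤ) : M2) = 1 by
      rw [← Units.val_mul, mul_inv_cancel, Units.val_one]]
    exact map_one (Int.castRingHom (ZMod 2)).mapMatrix
  rw [← hP, key, key, hA, mul_one, ← key, hinv]

lemma cnj_T (k a b c d : ℤ) :
    Cnj !![a,b;c,d] !![a+k*c, b+k*(d-a)-k^2*c; c, d-k*c] := by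
  apply cnj_explicit (M := !![1,k;0,1]) (N := !![1,-k;0,1]) _ ?_ ?_ ?_ <;>
  · ext i j
    fin_cases i <;> fin_cases j <;>
      simp [Matrix.mul_apply, Fin.sum_univ_two, Matrix.one_apply] <;> ring

lemma cnj_S (a b c d : ℤ) : Cnj !![a,b;c,d] !![d,-c;-b,a] := by
  apply cnj_explicit (M := !![0,1;-1,0]) (N := !![0,-1;1,0]) _ ?_ ?_ ?_ <;>
  · ext i j
    fin_cases i <;> fin_cases j <;>
      simp [Matrix.mul_apply, Fin.sum_univ_two, Matrix.one_apply] <;> ring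

lemma cnj_D (a b c d : ℤ) : Cnj !![a,b;c,d] !![a,-b;-c,d] := by
  apply cnj_explicit (M := !![1,0;0,-1]) (N := !![1,0;0,-1]) _ ?_ ?_ ?_ <;>
  · ext i j
    fin_cases i <;> fin_cases j <;>
      simp [Matrix.mul_apply, Fin.sum_univ_two, Matrix.one_apply] <;> ring

lemma ch (a b c d : ℤ) : (!![a,b;c,d] : M2) * !![a,b;c,d]
    = (a + d) • !![a,b;c,d] - (a*d - b*c) • (1 : M2) := by
  have h1 : (a + d) • (!![a,b;c,d] : M2) = !![(a+d)*a,(a+d)*b;(a+d)*c,(a+d)*d] := by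
    rw [show (!![a,b;c,d] : M2) = of ![![a,b],![c,d]] from rfl, smul_of]
    congr 1
    funext i j
    fin_cases i <;> fin_cases j <;> simp
  have h2 : (a*d - b*c) • (1 : M2) = !![a*d-b*c,0;0,a*d-b*c] := by
    rw [Matrix.one_fin_two, show (!![(1:ℤ),0;0,1] : M2) = of ![![1,0],![0,1]] from rfl, smul_of]
    congr 1
    funext i j
    fin_cases i <;> fin_cases j <;> simp
  rw [h1, h2, Matrix.mul_fin_two]
  ext i j
  fin_cases i <;> fin_cases j <;> simp <;> ring

lemma ch' (M : M2) : M * M = M.trace • M - M.det • (1 : M2) := by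
  have h := ch (M 0 0) (M 0 1) (M 1 0) (M 1 1)
  rw [← Matrix.eta_fin_two M] at h
  rw [Matrix.trace_fin_two, Matrix.det_fin_two]
  exact h

lemma pow_rec (M : M2) (n : ℕ) :
    M ^ (n+2) = M.trace • M ^ (n+1) - M.det • M ^ n := by
  have h : M ^ (n+2) = M ^ n * (M * M) := by
    rw [pow_succ, pow_succ, mul_assoc]
  rw [h, ch' M, mul_sub, mul_smul_comm, mul_smul_comm, ← pow_succ]
  simp

lemma trace_pow_rec (M : M2) (n : ℕ) :
    (M ^ (n+2)).trace = M.trace * (M ^ (n+1)).trace - M.det * (M ^ n).trace := by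
  rw [pow_rec, trace_sub, trace_smul, trace_smul]; simp

lemma grow (M : M2) (hd : M.det = 1) (ht : 3 ≤ M.trace) (n : ℕ) (hn : 1 ≤ n)
    (h1 : M ^ n = 1) : False := by
  have key : ∀ k : ℕ, 2 ≤ (M ^ k).trace ∧ (M ^ k).trace < (M ^ (k+1)).trace := by
    intro k
    induction k with
    | zero => simpa [Matrix.trace_one] using (by omega : (2:ℤ) < M.trace)
    | succ k ih =>
      have hrec := trace_pow_rec M k
      rw [hd] at hrec
      constructor
      · omega
      · nlinarith [ih.1, ih.2]
  have h2 : 2 < (M ^ n).trace := by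
    obtain ⟨m, rfl⟩ : ∃ m, n = m + 1 := ⟨n - 1, by omega⟩
    have := (key m).1
    have := (key m).2
    omega
  rw [h1] at h2
  simp [Matrix.trace_one] at h2

lemma unipotent (M : M2) (hd : M.det = 1) (ht : M.trace = 2) (n : ℕ) (hn : 1 ≤ n)
    (h1 : M ^ n = 1) : M = 1 := by
  set N := M - 1 with hN
  have hNN : N * N = 0 := by
    have h := ch' M
    rw [hd, ht] at h
    have : (2:ℤ) • M = M + M := two_smul ℤ M
    rw [this, one_smul] at h
    calc N * N = M * M - M - M + 1 := by rw [hN]; noncomm_ring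
    _ = 0 := by rw [h]; abel
  have key : ∀ k : ℕ, M ^ k = 1 + (k:ℤ) • N := by
    intro k
    induction k with
    | zero => simp
    | succ k ih =>
      have hM : M = 1 + N := by rw [hN]; abel
      rw [pow_succ, ih]
      rw [hM]
      rw [mul_add, mul_one, add_mul, one_mul, smul_mul_assoc, hNN, smul_zero, add_zero]
      push_cast
      rw [add_smul, one_smul]
      abel
  have h2 := key n
  rw [h1] at h2
  have h3 : (n:ℤ) • N = 0 := by
    have := h2.symm
    rwa [add_eq_left] at this
  have h4 : N = 0 := by
    rcases smul_eq_zero.mp h3 with h | h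
    · exfalso; exact_mod_cast (by omega : ¬ (n:ℤ) = 0) h
    · exact h
  rw [hN] at h4
  have : M = 1 := by linear_combination (norm := abel) h4
  exact this

lemma reduce_step (t a b c d : ℤ) (hc : 1 ≤ c) (htr : a + d = t)
    (hdet : a * d - b * c = 1) :
    ∃ a' b' d', Cnj !![a,b;c,d] !![a',b';c,d'] ∧ a' + d' = t ∧
      a' * d' - b' * c = 1 ∧ -c ≤ d' - a' ∧ d' - a' < c := by
  set k := (d - a + c) / (2*c) with hk
  have h2c : 0 < 2*c := by omega
  have hdm := Int.mul_ediv_add_emod (d - a + c) (2*c)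
  have hq1 : 0 ≤ (d - a + c) % (2*c) := Int.emod_nonneg _ (by omega)
  have hq2 : (d - a + c) % (2*c) < 2*c := Int.emod_lt_of_pos _ h2c
  have hr : d - k*c - (a + k*c) = (d - a + c) % (2*c) - c := by rw [hk]; linear_combination -hdm
  refine ⟨a + k*c, b + k*(d-a) - k^2*c, d - k*c, cnj_T k a b c d, by ring_nf; linarith,
    by linear_combination hdet, by omega, by omega⟩

/-- target representative for trace `t`, `det 1`, `t ∈ {-1,0,1}` -/
def tgt (t : ℤ) : M2 := if t = -1 then !![0,1;-1,-1] else if t = 1 then !![0,-1;1,1] else !![0,1;-1,0]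

lemma descent : ∀ n : ℕ, ∀ t a b d : ℤ, (t = -1 ∨ t = 0 ∨ t = 1) → a + d = t →
    a * d - b * (n:ℤ) = 1 → 1 ≤ n → Cnj !![a, b; (n:ℤ), d] (tgt t) := by
  intro n
  induction n using Nat.strong_induction_on with
  | _ n IH =>
    intro t a b d ht htr hdet hn
    have hc : (1:ℤ) ≤ (n:ℤ) := by exact_mod_cast hn
    obtain ⟨a', b', d', hcnj, htr', hdet', hr1, hr2⟩ :=
      reduce_step t a b (n:ℤ) d hc htr hdet
    have ht2 : t^2 ≤ 1 := by rcases ht with rfl|rfl|rfl <;> norm_num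
    have e4 : 4*b'*(n:ℤ) = t^2 - (d'-a')^2 - 4 := by
      linear_combination (a'+d'+t)*htr' - 4*hdet'
    have hb' : b' ≤ -1 := by nlinarith [sq_nonneg (d'-a')]
    by_cases hcase : (-b').toNat < n
    · -- swap and recurse
      have hm : ((-b').toNat : ℤ) = -b' := Int.toNat_of_nonneg (by omega)
      have step2 : Cnj !![a',b';(n:ℤ),d'] !![d', -(n:ℤ); -b', a'] := cnj_S a' b' (n:ℤ) d'
      have step2' : Cnj !![a',b';(n:ℤ),d'] !![d', -(n:ℤ); ((-b').toNat : ℤ), a'] := by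
        rwa [hm]
      have hrec := IH (-b').toNat hcase t d' (-(n:ℤ)) a' ht (by linarith)
        (by rw [hm]; linear_combination hdet') (by omega)
      exact cnj_trans hcnj (cnj_trans step2' hrec)
    · -- terminal
      have hbc : (n:ℤ) ≤ -b' := by omega
      have hsq : (d'-a')^2 ≤ (n:ℤ)^2 := by nlinarith
      have hc1 : (n:ℤ) = 1 := by nlinarith
      rw [hc1] at hcnj hdet' e4 hr1 hr2 ⊢
      have hr : d' - a' = -1 ∨ d' - a' = 0 := by omega
      rcases ht with rfl|rfl|rfl
      · -- t = -1 : terminal matrix !![0,-1;1,-1]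
        rcases hr with h|h
        · rw [h] at e4
          norm_num at e4
          have ha0 : a' = 0 := by omega
          have hd1 : d' = -1 := by omega
          have hb1 : b' = -1 := by omega
          rw [ha0, hb1, hd1] at hcnj
          refine cnj_trans hcnj ?_
          have h5 := cnj_D 0 (-1) 1 (-1)
          have htgt : tgt (-1) = !![0,1;-1,-1] := by norm_num [tgt]
          rw [htgt]
          norm_num at h5
          exact h5
        · exfalso; rw [h] at e4; norm_num at e4; omega
      · -- t = 0 : terminal !![0,-1;1,0]
        rcases hr with h|h
        · exfalso; rw [h] at e4; norm_num at e4; omega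
        · rw [h] at e4
          norm_num at e4
          have ha0 : a' = 0 := by omega
          have hd1 : d' = 0 := by omega
          have hb1 : b' = -1 := by omega
          rw [ha0, hb1, hd1] at hcnj
          refine cnj_trans hcnj ?_
          have h5 := cnj_D 0 (-1) 1 0
          have htgt : tgt 0 = !![0,1;-1,0] := by norm_num [tgt]
          rw [htgt]
          norm_num at h5
          exact h5
      · -- t = 1 : terminal !![1,-1;1,0]
        rcases hr with h|h
        · rw [h] at e4
          norm_num at e4
          have ha0 : a' = 1 := by omega
          have hd1 : d' = 0 := by omega
          have hb1 : b' = -1 := by omega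
          rw [ha0, hb1, hd1] at hcnj
          refine cnj_trans hcnj ?_
          have htgt : tgt 1 = !![0,-1;1,1] := by norm_num [tgt]
          rw [htgt]
          exact cnj_explicit (M := !![0,-1;1,0]) (N := !![0,1;-1,0]) _ (by
            ext i j; fin_cases i <;> fin_cases j <;>
              simp [Matrix.mul_apply, Fin.sum_univ_two, Matrix.one_apply]) (by
            ext i j; fin_cases i <;> fin_cases j <;>
              simp [Matrix.mul_apply, Fin.sum_univ_two, Matrix.one_apply]) (by
            ext i j; fin_cases i <;> fin_cases j <;>
              simp [Matrix.mul_apply, Fin.sum_univ_two])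
        · exfalso; rw [h] at e4; norm_num at e4; omega

lemma cnj_tgt (t a b c d : ℤ) (ht : t = -1 ∨ t = 0 ∨ t = 1) (htr : a + d = t)
    (hdet : a*d - b*c = 1) : Cnj !![a,b;c,d] (tgt t) := by
  have ht2 : t^2 ≤ 1 := by rcases ht with rfl|rfl|rfl <;> norm_num
  have e0 : 4*(b*c) = t^2 - (a-d)^2 - 4 := by linear_combination (a+d+t)*htr - 4*hdet
  have hbc : 4*(b*c) ≤ -3 := by nlinarith [sq_nonneg (a-d)]
  rcases lt_trichotomy c 0 with hc|hc|hc
  · have step := cnj_D a b c d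
    have hrec := descent (-c).toNat t a (-b) d ht htr
      (by rw [Int.toNat_of_nonneg (by omega : (0:ℤ) ≤ -c)]; linear_combination hdet)
      (by omega)
    rw [Int.toNat_of_nonneg (by omega : (0:ℤ) ≤ -c)] at hrec
    exact cnj_trans step hrec
  · exfalso; rw [hc] at hbc; omega
  · have hrec := descent c.toNat t a b d ht htr
      (by rw [Int.toNat_of_nonneg (by omega : (0:ℤ) ≤ c)]; linear_combination hdet)
      (by omega)
    rw [Int.toNat_of_nonneg (by omega : (0:ℤ) ≤ c)] at hrec
    exact hrec

lemma trace_sq (M : M2) : (M * M).trace = M.trace^2 - 2 * M.det := by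
  rw [ch']
  rw [trace_sub, trace_smul, trace_smul, trace_one]
  simp [smul_eq_mul, Fintype.card_fin]
  ring

lemma constraint (A : GL (Fin 2) ℤ) (n : ℕ) (hn : 1 ≤ n)
    (h1 : (A : M2) ^ n = 1) (hdet : (A : M2).det = 1 ∨ (A : M2).det = -1) :
    ((A : M2).det = 1 ∧ (A : M2).trace^2 ≤ 4) ∨ ((A : M2).det = -1 ∧ (A : M2).trace = 0) := by
  set M : M2 := (A : M2)
  have hBpow : (M * M) ^ n = 1 := by
    rw [show M * M = M^2 from (pow_two M).symm, ← pow_mul, mul_comm 2 n, pow_mul, h1, one_pow]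
  have hBdet : (M * M).det = 1 := by
    rw [Matrix.det_mul]
    rcases hdet with h|h <;> rw [h] <;> norm_num
  have hBtr : (M * M).trace ≤ 2 := by
    by_contra h
    exact grow (M * M) hBdet (by omega) n hn hBpow
  rw [trace_sq] at hBtr
  rcases hdet with h|h
  · left; refine ⟨h, ?_⟩; rw [h] at hBtr; omega
  · right; refine ⟨h, ?_⟩; rw [h] at hBtr; nlinarith [sq_nonneg M.trace]

lemma upper_tri (m : ℤ) :
    Cnj !![1,m;0,-1] !![1, m % 2; 0, -1] := by
  have h := cnj_T (m/2) 1 m 0 (-1)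
  have e : m + m/2*(-1-1) - (m/2)^2*0 = m % 2 := by
    have := Int.mul_ediv_add_emod m 2
    ring_nf
    omega
  rw [show (1:ℤ) + m/2*0 = 1 by ring, e, show (-1:ℤ) - m/2*0 = -1 by ring] at h
  exact h

lemma lower_tri (m : ℤ) :
    Cnj !![1,0;m,-1] !![1, 0; m % 2, -1] := by
  apply cnj_explicit (M := !![1,0;-(m/2),1]) (N := !![1,0;m/2,1]) _ ?_ ?_ ?_
  · ext i j; fin_cases i <;> fin_cases j <;>
      simp [Matrix.mul_apply, Fin.sum_univ_two, Matrix.one_apply]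
  · ext i j; fin_cases i <;> fin_cases j <;>
      simp [Matrix.mul_apply, Fin.sum_univ_two, Matrix.one_apply]
  · have := Int.mul_ediv_add_emod m 2
    ext i j; fin_cases i <;> fin_cases j <;>
      simp [Matrix.mul_apply, Fin.sum_univ_two] <;> omega

lemma flip_case : Cnj !![1,0;1,-1] !![1,1;0,-1] := by
  apply cnj_explicit (M := !![0,1;1,-2]) (N := !![2,1;1,0]) _ ?_ ?_ ?_ <;>
  · ext i j; fin_cases i <;> fin_cases j <;>
      simp [Matrix.mul_apply, Fin.sum_univ_two, Matrix.one_apply]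

lemma order2_neg (a b c d : ℤ) (htr : a + d = 0) (hdet : a*d - b*c = -1) :
    Cnj !![a,b;c,d] !![1,0;0,-1] ∨ Cnj !![a,b;c,d] !![1,1;0,-1] := by
  have hd : d = -a := by omega
  have habc : a^2 + b*c = 1 := by rw [hd] at hdet; linear_combination -hdet
  by_cases h0 : a + 1 = 0 ∧ c = 0
  · -- A = !![-1, b; 0, 1]
    obtain ⟨h1, h2⟩ := h0
    have ha : a = -1 := by omega
    have hd' : d = 1 := by omega
    subst ha h2 hd'
    -- conjugate by J to !![1,0;b,-1]
    have stepJ : Cnj !![(-1:ℤ),b;0,1] !![1,0;b,-1] := by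
      apply cnj_explicit (M := !![0,1;1,0]) (N := !![0,1;1,0]) _ ?_ ?_ ?_ <;>
      · ext i j; fin_cases i <;> fin_cases j <;>
          simp [Matrix.mul_apply, Fin.sum_univ_two, Matrix.one_apply]
    have stepL := lower_tri b
    have : Cnj !![(-1:ℤ),b;0,1] !![1, 0; b % 2, -1] := cnj_trans stepJ stepL
    rcases Int.emod_two_eq_zero_or_one b with h|h
    · left
      rw [h] at this
      exact this
    · right
      rw [h] at this
      exact cnj_trans this flip_case
  · -- eigenvector (a+1, c) is nonzero
    set g : ℤ := (Int.gcd (a+1) c : ℤ) with hg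
    have hgpos : 0 < Int.gcd (a+1) c := by
      rcases Nat.eq_zero_or_pos (Int.gcd (a+1) c) with h|h
      · exfalso; rw [Int.gcd_eq_zero_iff] at h; exact h0 ⟨h.1, h.2⟩
      · exact h
    have hgz : g ≠ 0 := by simp [hg]; omega
    have hdvd1 : g ∣ (a+1) := Int.gcd_dvd_left _ _
    have hdvd2 : g ∣ c := Int.gcd_dvd_right _ _
    set p : ℤ := (a+1)/g with hp
    set q : ℤ := c/g with hq
    have hpg : g * p = a + 1 := Int.mul_ediv_cancel' hdvd1
    have hqg : g * q = c := Int.mul_ediv_cancel' hdvd2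
    have hcop : Int.gcd p q = 1 := Int.gcd_div_gcd_div_gcd hgpos
    obtain ⟨u, v, hbez⟩ := Int.isCoprime_iff_gcd_eq_one.mpr hcop
    -- relations : A (p, q) = (p, q)
    have e1 : a * (a+1) + b * c = a + 1 := by linear_combination habc
    have e2 : c * (a+1) + d * c = c := by rw [hd]; ring
    have ep : a * p + b * q = p := by
      apply mul_left_cancel₀ hgz
      rw [← hpg, ← hqg] at e1
      linear_combination e1
    have eq' : c * p + d * q = q := by
      rw [← hqg, hd]
      linear_combination q*hpg
    -- conjugate by Pinv = !![u,v;-q,p], P = !![p,-v;q,u]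
    have hM1 : (!![u,v;-q,p] : M2) * !![p,-v;q,u] = 1 := by
      ext i j; fin_cases i <;> fin_cases j <;>
        simp [Matrix.mul_apply, Fin.sum_univ_two, Matrix.one_apply] <;>
        linarith [hbez]
    have hM2 : (!![p,-v;q,u] : M2) * !![u,v;-q,p] = 1 := by
      ext i j; fin_cases i <;> fin_cases j <;>
        simp [Matrix.mul_apply, Fin.sum_univ_two, Matrix.one_apply] <;>
        linarith [hbez]
    have hB := cnj_of (M := !![u,v;-q,p]) (N := !![p,-v;q,u]) !![a,b;c,d] hM1 hM2
    set B : M2 := !![u,v;-q,p] * !![a,b;c,d] * !![p,-v;q,u] with hBdef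
    have hB00 : B 0 0 = 1 := by
      simp [hBdef, Matrix.mul_apply, Fin.sum_univ_two]
      linear_combination u*ep + v*eq' + hbez
    have hB10 : B 1 0 = 0 := by
      simp [hBdef, Matrix.mul_apply, Fin.sum_univ_two]
      linear_combination (-q)*ep + p*eq'
    have htrB : B 0 0 + B 1 1 = 0 := by
      have := cnj_trace hB
      rw [Matrix.trace_fin_two, Matrix.trace_fin_two] at this
      simp [hBdef] at this ⊢
      omega
    have hB11 : B 1 1 = -1 := by omega
    have hBeta := Matrix.eta_fin_two B
    rw [hB00, hB10, hB11] at hBeta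
    rw [hBeta] at hB
    have := cnj_trans hB (upper_tri (B 0 1))
    rcases Int.emod_two_eq_zero_or_one (B 0 1) with h|h
    · left; rw [h] at this; exact this
    · right
      rw [h] at this
      exact this

lemma mod2_23 {A B : M2} (hA : A = !![1,0;0,-1]) (hB : B = !![1,1;0,-1]) (h : Cnj A B) :
    False := by
  subst hA hB
  have h1 : (!![1,0;0,-1] : M2).map (Int.cast : ℤ → ZMod 2) = 1 := by
    ext i j
    fin_cases i <;> fin_cases j <;> simp [Matrix.map_apply, Matrix.one_apply] <;> decide
  have h2 := cnj_mod2 h h1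
  have h3 := congrFun (congrFun h2 0) 1
  simp [Matrix.map_apply, Matrix.one_apply] at h3


lemma sep (L : Fin 7 → M2)
    (hL : L = ![!![1, 0; 0, 1], !![-1, 0; 0, -1], !![1, 0; 0, -1], !![1, 1; 0, -1],
      !![0, 1; -1, -1], !![0, -1; 1, 1], !![0, 1; -1, 0]])
    (i j : Fin 7) (h : Cnj (L i) (L j)) : i = j := by
  subst hL
  fin_cases i <;> fin_cases j
  · rfl
  · exfalso
    have h1 := cnj_trace (show Cnj (!![1, 0; 0, 1] : M2) !![-1, 0; 0, -1] from h)
    norm_num [Matrix.trace_fin_two] at h1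
  · exfalso
    have h1 := cnj_trace (show Cnj (!![1, 0; 0, 1] : M2) !![1, 0; 0, -1] from h)
    norm_num [Matrix.trace_fin_two] at h1
  · exfalso
    have h1 := cnj_trace (show Cnj (!![1, 0; 0, 1] : M2) !![1, 1; 0, -1] from h)
    norm_num [Matrix.trace_fin_two] at h1
  · exfalso
    have h1 := cnj_trace (show Cnj (!![1, 0; 0, 1] : M2) !![0, 1; -1, -1] from h)
    norm_num [Matrix.trace_fin_two] at h1
  · exfalso
    have h1 := cnj_trace (show Cnj (!![1, 0; 0, 1] : M2) !![0, -1; 1, 1] from h)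
    norm_num [Matrix.trace_fin_two] at h1
  · exfalso
    have h1 := cnj_trace (show Cnj (!![1, 0; 0, 1] : M2) !![0, 1; -1, 0] from h)
    norm_num [Matrix.trace_fin_two] at h1
  · exfalso
    have h1 := cnj_trace (show Cnj (!![-1, 0; 0, -1] : M2) !![1, 0; 0, 1] from h)
    norm_num [Matrix.trace_fin_two] at h1
  · rfl
  · exfalso
    have h1 := cnj_trace (show Cnj (!![-1, 0; 0, -1] : M2) !![1, 0; 0, -1] from h)
    norm_num [Matrix.trace_fin_two] at h1
  · exfalso
    have h1 := cnj_trace (show Cnj (!![-1, 0; 0, -1] : M2) !![1, 1; 0, -1] from h)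
    norm_num [Matrix.trace_fin_two] at h1
  · exfalso
    have h1 := cnj_trace (show Cnj (!![-1, 0; 0, -1] : M2) !![0, 1; -1, -1] from h)
    norm_num [Matrix.trace_fin_two] at h1
  · exfalso
    have h1 := cnj_trace (show Cnj (!![-1, 0; 0, -1] : M2) !![0, -1; 1, 1] from h)
    norm_num [Matrix.trace_fin_two] at h1
  · exfalso
    have h1 := cnj_trace (show Cnj (!![-1, 0; 0, -1] : M2) !![0, 1; -1, 0] from h)
    norm_num [Matrix.trace_fin_two] at h1
  · exfalso
    have h1 := cnj_trace (show Cnj (!![1, 0; 0, -1] : M2) !![1, 0; 0, 1] from h)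
    norm_num [Matrix.trace_fin_two] at h1
  · exfalso
    have h1 := cnj_trace (show Cnj (!![1, 0; 0, -1] : M2) !![-1, 0; 0, -1] from h)
    norm_num [Matrix.trace_fin_two] at h1
  · rfl
  · exact (mod2_23 rfl rfl (show Cnj (!![1, 0; 0, -1] : M2) !![1, 1; 0, -1] from h)).elim
  · exfalso
    have h1 := cnj_trace (show Cnj (!![1, 0; 0, -1] : M2) !![0, 1; -1, -1] from h)
    norm_num [Matrix.trace_fin_two] at h1
  · exfalso
    have h1 := cnj_trace (show Cnj (!![1, 0; 0, -1] : M2) !![0, -1; 1, 1] from h)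
    norm_num [Matrix.trace_fin_two] at h1
  · exfalso
    have h1 := cnj_det (show Cnj (!![1, 0; 0, -1] : M2) !![0, 1; -1, 0] from h)
    norm_num [Matrix.det_fin_two] at h1
  · exfalso
    have h1 := cnj_trace (show Cnj (!![1, 1; 0, -1] : M2) !![1, 0; 0, 1] from h)
    norm_num [Matrix.trace_fin_two] at h1
  · exfalso
    have h1 := cnj_trace (show Cnj (!![1, 1; 0, -1] : M2) !![-1, 0; 0, -1] from h)
    norm_num [Matrix.trace_fin_two] at h1
  · exact (mod2_23 rfl rfl (cnj_symm (show Cnj (!![1, 1; 0, -1] : M2) !![1, 0; 0, -1] from h))).elim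
  · rfl
  · exfalso
    have h1 := cnj_trace (show Cnj (!![1, 1; 0, -1] : M2) !![0, 1; -1, -1] from h)
    norm_num [Matrix.trace_fin_two] at h1
  · exfalso
    have h1 := cnj_trace (show Cnj (!![1, 1; 0, -1] : M2) !![0, -1; 1, 1] from h)
    norm_num [Matrix.trace_fin_two] at h1
  · exfalso
    have h1 := cnj_det (show Cnj (!![1, 1; 0, -1] : M2) !![0, 1; -1, 0] from h)
    norm_num [Matrix.det_fin_two] at h1
  · exfalso
    have h1 := cnj_trace (show Cnj (!![0, 1; -1, -1] : M2) !![1, 0; 0, 1] from h)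
    norm_num [Matrix.trace_fin_two] at h1
  · exfalso
    have h1 := cnj_trace (show Cnj (!![0, 1; -1, -1] : M2) !![-1, 0; 0, -1] from h)
    norm_num [Matrix.trace_fin_two] at h1
  · exfalso
    have h1 := cnj_trace (show Cnj (!![0, 1; -1, -1] : M2) !![1, 0; 0, -1] from h)
    norm_num [Matrix.trace_fin_two] at h1
  · exfalso
    have h1 := cnj_trace (show Cnj (!![0, 1; -1, -1] : M2) !![1, 1; 0, -1] from h)
    norm_num [Matrix.trace_fin_two] at h1
  · rfl
  · exfalso
    have h1 := cnj_trace (show Cnj (!![0, 1; -1, -1] : M2) !![0, -1; 1, 1] from h)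
    norm_num [Matrix.trace_fin_two] at h1
  · exfalso
    have h1 := cnj_trace (show Cnj (!![0, 1; -1, -1] : M2) !![0, 1; -1, 0] from h)
    norm_num [Matrix.trace_fin_two] at h1
  · exfalso
    have h1 := cnj_trace (show Cnj (!![0, -1; 1, 1] : M2) !![1, 0; 0, 1] from h)
    norm_num [Matrix.trace_fin_two] at h1
  · exfalso
    have h1 := cnj_trace (show Cnj (!![0, -1; 1, 1] : M2) !![-1, 0; 0, -1] from h)
    norm_num [Matrix.trace_fin_two] at h1
  · exfalso
    have h1 := cnj_trace (show Cnj (!![0, -1; 1, 1] : M2) !![1, 0; 0, -1] from h)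
    norm_num [Matrix.trace_fin_two] at h1
  · exfalso
    have h1 := cnj_trace (show Cnj (!![0, -1; 1, 1] : M2) !![1, 1; 0, -1] from h)
    norm_num [Matrix.trace_fin_two] at h1
  · exfalso
    have h1 := cnj_trace (show Cnj (!![0, -1; 1, 1] : M2) !![0, 1; -1, -1] from h)
    norm_num [Matrix.trace_fin_two] at h1
  · rfl
  · exfalso
    have h1 := cnj_trace (show Cnj (!![0, -1; 1, 1] : M2) !![0, 1; -1, 0] from h)
    norm_num [Matrix.trace_fin_two] at h1
  · exfalso
    have h1 := cnj_trace (show Cnj (!![0, 1; -1, 0] : M2) !![1, 0; 0, 1] from h)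
    norm_num [Matrix.trace_fin_two] at h1
  · exfalso
    have h1 := cnj_trace (show Cnj (!![0, 1; -1, 0] : M2) !![-1, 0; 0, -1] from h)
    norm_num [Matrix.trace_fin_two] at h1
  · exfalso
    have h1 := cnj_det (show Cnj (!![0, 1; -1, 0] : M2) !![1, 0; 0, -1] from h)
    norm_num [Matrix.det_fin_two] at h1
  · exfalso
    have h1 := cnj_det (show Cnj (!![0, 1; -1, 0] : M2) !![1, 1; 0, -1] from h)
    norm_num [Matrix.det_fin_two] at h1
  · exfalso
    have h1 := cnj_trace (show Cnj (!![0, 1; -1, 0] : M2) !![0, 1; -1, -1] from h)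
    norm_num [Matrix.trace_fin_two] at h1
  · exfalso
    have h1 := cnj_trace (show Cnj (!![0, 1; -1, 0] : M2) !![0, -1; 1, 1] from h)
    norm_num [Matrix.trace_fin_two] at h1
  · rfl

lemma existence (A : GL (Fin 2) ℤ) (hA : IsOfFinOrder A) :
    ∃ i : Fin 7, Cnj (A : M2)
      (![!![1, 0; 0, 1], !![-1, 0; 0, -1], !![1, 0; 0, -1], !![1, 1; 0, -1],
        !![0, 1; -1, -1], !![0, -1; 1, 1], !![0, 1; -1, 0]] i) := by
  set n := orderOf A with hnn
  have hn : 1 ≤ n := hA.orderOf_pos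
  have hpow : (A : M2) ^ n = 1 := by
    have := pow_orderOf_eq_one A
    have h2 := congrArg (Units.val) this
    rwa [Units.val_pow_eq_pow_val, Units.val_one] at h2
  have hdetu : (A : M2).det = 1 ∨ (A : M2).det = -1 := by
    have h3 : (A : M2) * ((A⁻¹ : GL (Fin 2) ℤ) : M2) = 1 := by
      rw [← Units.val_mul, mul_inv_cancel, Units.val_one]
    have h4 := congrArg Matrix.det h3
    rw [Matrix.det_mul, Matrix.det_one] at h4
    exact Int.isUnit_iff.mp (IsUnit.of_mul_eq_one _ h4)
  rcases constraint A n hn hpow hdetu with ⟨hd, htr⟩ | ⟨hd, htr⟩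
  · -- det 1
    have heta := Matrix.eta_fin_two (A : M2)
    set a := (A : M2) 0 0
    set b := (A : M2) 0 1
    set c := (A : M2) 1 0
    set d := (A : M2) 1 1
    have hdet2 : a * d - b * c = 1 := by
      rw [Matrix.det_fin_two] at hd; exact hd
    have htr2 : ((A : M2)).trace = a + d := Matrix.trace_fin_two _
    rw [htr2] at htr
    have hrange : a + d = -2 ∨ a + d = -1 ∨ a + d = 0 ∨ a + d = 1 ∨ a + d = 2 := by
      have h1 : -2 ≤ a + d := by nlinarith
      have h2 : a + d ≤ 2 := by nlinarith
      omega
    rcases hrange with h|h|h|h|h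
    · -- A = -1
      refine ⟨1, ?_⟩
      have hneg : (-(A : M2)).det = 1 := by
        rw [Matrix.det_fin_two] at hd ⊢
        simp only [Matrix.neg_apply]
        linear_combination hd
      have hnegtr : (-(A : M2)).trace = 2 := by
        rw [Matrix.trace_fin_two] at *
        simp only [Matrix.neg_apply]
        omega
      have hnegpow : (-(A : M2)) ^ (2*n) = 1 := by
        rw [Even.neg_pow (by exact even_two_mul n), mul_comm 2 n, pow_mul, hpow, one_pow]
      have := unipotent (-(A : M2)) hneg hnegtr (2*n) (by omega) hnegpow
      have hA1 : (A : M2) = -1 := by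
        have := congrArg Neg.neg this
        rw [neg_neg] at this
        rw [this]
      rw [hA1]
      show Cnj (-1) !![-1,0;0,-1]
      have : (!![-1,0;0,-1] : M2) = -1 := by
        have h1 : (-1 : M2) = -(1:M2) := rfl
        rw [h1, Matrix.one_fin_two]
        ext i j
        fin_cases i <;> fin_cases j <;> simp
      rw [this]
      exact cnj_refl _
    · refine ⟨4, ?_⟩
      have := cnj_tgt (-1) a b c d (by norm_num) h hdet2
      rw [heta]
      simpa [tgt] using this
    · refine ⟨6, ?_⟩
      have := cnj_tgt 0 a b c d (by norm_num) h hdet2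
      rw [heta]
      simpa [tgt] using this
    · refine ⟨5, ?_⟩
      have := cnj_tgt 1 a b c d (by norm_num) h hdet2
      rw [heta]
      simpa [tgt] using this
    · -- A = 1
      refine ⟨0, ?_⟩
      have h1 := unipotent (A : M2) hd (by rw [htr2]; omega) n hn hpow
      rw [h1]
      show Cnj 1 !![1,0;0,1]
      rw [← Matrix.one_fin_two]
      exact cnj_refl _
  · -- det -1, trace 0
    have heta := Matrix.eta_fin_two (A : M2)
    set a := (A : M2) 0 0
    set b := (A : M2) 0 1
    set c := (A : M2) 1 0
    set d := (A : M2) 1 1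
    have hdet2 : a * d - b * c = -1 := by
      rw [Matrix.det_fin_two] at hd; exact hd
    have htr2 : a + d = 0 := by
      rw [Matrix.trace_fin_two] at htr; exact htr
    rcases order2_neg a b c d htr2 hdet2 with h|h
    · exact ⟨2, by rw [heta]; exact h⟩
    · exact ⟨3, by rw [heta]; exact h⟩

/-- **Torsion elements of `GL₂(ℤ)` up to conjugacy.**
Every element of finite order of `GL₂(ℤ)` is conjugate in `GL₂(ℤ)` to exactly one of the
seven matrices `I₂`, `−I₂`, `diag(1,−1)`, `[[1,1],[0,−1]]`, `T₃ = [[0,1],[−1,−1]]`,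
`T₆ = [[0,−1],[1,1]]`, `T₄ = [[0,1],[−1,0]]`; in particular no two distinct matrices of
this list are conjugate in `GL₂(ℤ)`. -/
theorem torsion_classification_GL2Z
    (L : Fin 7 → Matrix (Fin 2) (Fin 2) ℤ)
    (hL : L = ![!![1, 0; 0, 1], !![-1, 0; 0, -1], !![1, 0; 0, -1], !![1, 1; 0, -1],
      !![0, 1; -1, -1], !![0, -1; 1, 1], !![0, 1; -1, 0]]) :
    (∀ A : GL (Fin 2) ℤ, IsOfFinOrder A →
      ∃! i : Fin 7, ∃ P : GL (Fin 2) ℤ,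
        (P : Matrix (Fin 2) (Fin 2) ℤ) * (A : Matrix (Fin 2) (Fin 2) ℤ) *
            ((P⁻¹ : GL (Fin 2) ℤ) : Matrix (Fin 2) (Fin 2) ℤ) = L i) ∧
    (∀ i j : Fin 7,
      (∃ P : GL (Fin 2) ℤ,
        (P : Matrix (Fin 2) (Fin 2) ℤ) * L i *
            ((P⁻¹ : GL (Fin 2) ℤ) : Matrix (Fin 2) (Fin 2) ℤ) = L j) → i = j) := by
  constructor
  · intro A hA
    obtain ⟨i, hi⟩ := existence A hA
    rw [← hL] at hi
    refine ⟨i, hi, ?_⟩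
    intro j hj
    have hj' : Cnj (A : M2) (L j) := hj
    exact sep L hL j i (cnj_trans (cnj_symm hj') hi)
  · intro i j hij
    exact sep L hL i j hij
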